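/- Consider a heterogeneous game Γ(n,T,x,y,z) with y < 0 and z < 0 (coordination game). For a ∈ [0,1], the constant strategy α* with α*_t = a for all t ∈ T is a symmetric Nash equilibrium if and only if a = 0, a = 1, or a = ζ. -/

import Mathlib

open Finset

noncomputable def U {T : Type*} [Fintype T] (n : ℕ) (x : T → ℝ) (y z : ℝ)
    (α β : T → ℝ) : ℝ :=
  z * ∑ j, x j * β j +
    ∑ j, (x j / ((n : ℝ) - 1)) *
      (((n : ℝ) - 1) * y + (y + z) * β j - (n : ℝ) * (y + z) * ∑ i, x i * β i) * α j

def IsStrategy {T : Type*} (α : T → ℝ) : Prop :=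
  ∀ t, α t ∈ Set.Icc (0 : ℝ) 1

def IsSymNash {T : Type*} [Fintype T] (n : ℕ) (x : T → ℝ) (y z : ℝ)
    (α : T → ℝ) : Prop :=
  IsStrategy α ∧ ∀ β : T → ℝ, IsStrategy β → U n x y z β α ≤ U n x y z α α

theorem stmt2 {T : Type*} [Fintype T] (hT : 2 ≤ Fintype.card T)
    (n : ℕ) (x : T → ℝ) (hx : ∑ t, x t = 1)
    (hxt : ∀ t : T, 1 < (n : ℝ) * x t ∧ (n : ℝ) * x t < n)
    (y z : ℝ) (hy : y < 0) (hz : z < 0) (a : ℝ) (ha : a ∈ Set.Icc (0 : ℝ) 1) :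
    IsSymNash n x y z (fun _ : T => a) ↔ (a = 0 ∨ a = 1 ∨ a = y / (y + z)) := by
  obtain ⟨t0⟩ := Fintype.card_pos_iff.mp (by omega : 0 < Fintype.card T)
  have hn1 : (1:ℝ) < n := (hxt t0).1.trans (hxt t0).2
  have hn : ((n:ℝ) - 1) ≠ 0 := by linarith
  have hyz : y + z ≠ 0 := by linarith
  have hxpos : ∀ t, 0 < x t := by
    intro t
    nlinarith [(hxt t).1]
  set c := y - (y + z) * a with hc
  have hsa : ∑ j : T, x j * a = a := by
    rw [← Finset.sum_mul, hx, one_mul]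
  have key : ∀ β : T → ℝ, U n x y z β (fun _ => a)
      = z * a + c * ∑ j, x j * β j := by
    intro β
    simp only [U, hsa]
    rw [Finset.mul_sum]
    congr 1
    apply Finset.sum_congr rfl
    intro j _
    field_simp
    ring
  have hS : ∀ β : T → ℝ, IsStrategy β →
      0 ≤ ∑ j, x j * β j ∧ ∑ j, x j * β j ≤ 1 := by
    intro β hβ
    constructor
    · apply Finset.sum_nonneg
      intro j _
      exact mul_nonneg (hxpos j).le (hβ j).1
    · calc ∑ j, x j * β j ≤ ∑ j, x j := by
            apply Finset.sum_le_sum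
            intro j _
            nlinarith [(hβ j).2, hxpos j]
        _ = 1 := hx
  constructor
  · rintro ⟨_, hNash⟩
    rcases lt_trichotomy c 0 with hlt | heq | hgt
    · left
      have h0 : IsStrategy (fun _ : T => (0:ℝ)) := fun t => ⟨le_refl 0, zero_le_one⟩
      have := hNash (fun _ => 0) h0
      rw [key, key, hsa] at this
      simp only [mul_zero, Finset.sum_const_zero] at this
      nlinarith [ha.1]
    · right; right
      rw [hc] at heq
      field_simp
      linarith
    · right; left
      have h1 : IsStrategy (fun _ : T => (1:ℝ)) := fun t => ⟨zero_le_one, le_refl 1⟩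
      have := hNash (fun _ => 1) h1
      rw [key, key, hsa] at this
      simp only [mul_one, hx] at this
      nlinarith [ha.2]
  · intro h
    refine ⟨fun _ => ha, fun β hβ => ?_⟩
    rw [key, key, hsa]
    obtain ⟨hS0, hS1⟩ := hS β hβ
    rcases h with h0 | h1 | hζ
    · have : c = y := by rw [hc, h0]; ring
      rw [h0, this]
      nlinarith
    · have : c = -z := by rw [hc, h1]; ring
      rw [h1, this]
      nlinarith
    · have : c = 0 := by rw [hc, hζ]; field_simp; ring
      rw [this]
      simp
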